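/- (State value decomposition across discount factors.) Let π be any policy on a finite MDP and let γ, γ' be discount factors with 0 ≤ γ ≤ γ' < 1. Then for every state s, V_{γ'}^π(s) = V_γ^π(s) + Σ_{k=1}^∞ (γ' − γ) γ'^{k−1} (P_π^k V_γ^π)(s), where the series on the right converges. -/

import Mathlib

open Finset

noncomputable section

/-- Transition matrix of a policy `π` in an MDP with transition function `P`. -/
def polMatrix {S A : Type*} [Fintype S] [DecidableEq S] (P : S → A → S → ℝ) (π : S → A) :
    Matrix S S ℝ :=
  fun s s' => P s (π s) s'

/-- Reward vector of a policy `π` for a reward function `R`. -/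
def polReward {S A : Type*} (R : S → A → ℝ) (π : S → A) : S → ℝ :=
  fun s => R s (π s)

/-- Value vector of a policy: `V_γ^π = Σ_{k=0}^∞ γ^k P_π^k R_π`. -/
def valueVec {S A : Type*} [Fintype S] [DecidableEq S] (P : S → A → S → ℝ) (R : S → A → ℝ)
    (γ : ℝ) (π : S → A) : S → ℝ :=
  ∑' k : ℕ, γ ^ k • ((polMatrix P π ^ k).mulVec (polReward R π))

/-- Entries of powers of an entrywise-nonnegative matrix are nonnegative. -/
lemma stoch_pow_nonneg {S : Type*} [Fintype S] [DecidableEq S] (M : Matrix S S ℝ)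
    (hM0 : ∀ s s', 0 ≤ M s s') (k : ℕ) : ∀ s s', 0 ≤ (M ^ k) s s' := by
  induction k with
  | zero =>
      intro s s'
      rw [pow_zero, Matrix.one_apply]
      split_ifs <;> norm_num
  | succ k ih =>
      intro s s'
      rw [pow_succ, Matrix.mul_apply]
      exact Finset.sum_nonneg fun t _ => mul_nonneg (ih s t) (hM0 t s')

/-- Row sums of powers of a row-stochastic matrix are one. -/
lemma stoch_pow_rowsum {S : Type*} [Fintype S] [DecidableEq S] (M : Matrix S S ℝ)
    (hM1 : ∀ s, ∑ s', M s s' = 1) (k : ℕ) : ∀ s, ∑ s', (M ^ k) s s' = 1 := by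
  induction k with
  | zero => intro s; simp [Matrix.one_apply]
  | succ k ih =>
      intro s
      simp only [pow_succ, Matrix.mul_apply]
      rw [Finset.sum_comm]
      calc ∑ t, ∑ s', (M ^ k) s t * M t s'
          = ∑ t, (M ^ k) s t * ∑ s', M t s' := by simp [Finset.mul_sum]
        _ = 1 := by simp only [hM1, mul_one]; exact ih s

/-- A stochastic matrix maps `[0, C]`-valued vectors to `[0, C]`-valued vectors. -/
lemma stoch_mulVec_bound {S : Type*} [Fintype S] [DecidableEq S] (M : Matrix S S ℝ)
    (hM0 : ∀ s s', 0 ≤ M s s') (hM1 : ∀ s, ∑ s', M s s' = 1) (v : S → ℝ) (C : ℝ)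
    (hv0 : ∀ s, 0 ≤ v s) (hv1 : ∀ s, v s ≤ C) (s : S) :
    0 ≤ M.mulVec v s ∧ M.mulVec v s ≤ C := by
  constructor
  · exact Finset.sum_nonneg fun t _ => mul_nonneg (hM0 s t) (hv0 t)
  · calc M.mulVec v s = ∑ t, M s t * v t := rfl
      _ ≤ ∑ t, M s t * C := Finset.sum_le_sum fun t _ =>
          mul_le_mul_of_nonneg_left (hv1 t) (hM0 s t)
      _ = C := by rw [← Finset.sum_mul, hM1 s, one_mul]

/-- Regroup a summable double series over `ℕ × ℕ` by antidiagonals. -/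
lemma tsum_prod_eq_tsum_antidiagonal {F : ℕ × ℕ → ℝ} (hF : Summable F) :
    ∑' p : ℕ × ℕ, F p = ∑' n : ℕ, ∑ kl ∈ antidiagonal n, F kl := by
  conv_rhs => congr; ext; rw [← Finset.sum_finset_coe, ← tsum_fintype (L := .unconditional _)]
  rw [← Finset.HasAntidiagonal.sigmaAntidiagonalEquivProd.tsum_eq F]
  exact Summable.tsum_sigma' (fun n => (hasSum_fintype _).summable)
    (Finset.HasAntidiagonal.sigmaAntidiagonalEquivProd.summable_iff.mpr hF)

/-- **State value decomposition across discount factors.**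
For any policy `π` and discounts `0 ≤ γ ≤ γ' < 1`, for every state `s`,
`V_{γ'}^π(s) = V_γ^π(s) + Σ_{k=1}^∞ (γ' − γ) γ'^{k−1} (P_π^k V_γ^π)(s)`
(the series, indexed below by `k : ℕ` standing for `k+1 ≥ 1`, converges). -/
theorem value_decomposition_across_discounts
    {S A : Type*} [Fintype S] [DecidableEq S] [Nonempty S] [Fintype A] [Nonempty A]
    (P : S → A → S → ℝ) (R : S → A → ℝ) (Rmax : ℝ)
    (hP0 : ∀ s a s', 0 ≤ P s a s') (hP1 : ∀ s a, ∑ s', P s a s' = 1)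
    (hRmax : 0 ≤ Rmax) (hR0 : ∀ s a, 0 ≤ R s a) (hR1 : ∀ s a, R s a ≤ Rmax)
    (γ γ' : ℝ) (hγ0 : 0 ≤ γ) (hγγ' : γ ≤ γ') (hγ'1 : γ' < 1)
    (π : S → A) (s : S) :
    Summable (fun k : ℕ =>
        (γ' - γ) * γ' ^ k * (polMatrix P π ^ (k + 1)).mulVec (valueVec P R γ π) s) ∧
    valueVec P R γ' π s =
      valueVec P R γ π s +
        ∑' k : ℕ, (γ' - γ) * γ' ^ k * (polMatrix P π ^ (k + 1)).mulVec (valueVec P R γ π) s := by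
  have hγ'0 : 0 ≤ γ' := le_trans hγ0 hγγ'
  have hγ1 : γ < 1 := lt_of_le_of_lt hγγ' hγ'1
  have hγγ : 0 ≤ γ' - γ := sub_nonneg.mpr hγγ'
  set M : Matrix S S ℝ := polMatrix P π with hMdef
  set r : S → ℝ := polReward R π with hrdef
  have hM0 : ∀ t t', 0 ≤ M t t' := fun t t' => hP0 t (π t) t'
  have hM1 : ∀ t, ∑ t', M t t' = 1 := fun t => hP1 t (π t)
  -- the sequence of "iterated" reward vectors
  set c : ℕ → S → ℝ := fun n => (M ^ n).mulVec r with hcdef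
  have hcb : ∀ n t, 0 ≤ c n t ∧ c n t ≤ Rmax := fun n t =>
    stoch_mulVec_bound (M ^ n) (stoch_pow_nonneg M hM0 n) (stoch_pow_rowsum M hM1 n) r Rmax
      (fun t' => hR0 t' (π t')) (fun t' => hR1 t' (π t')) t
  -- geometric summability
  have hsum : ∀ (δ : ℝ), 0 ≤ δ → δ < 1 → ∀ t, Summable (fun n : ℕ => δ ^ n * c n t) := by
    intro δ hδ0 hδ1 t
    refine Summable.of_nonneg_of_le
      (fun n => mul_nonneg (pow_nonneg hδ0 n) (hcb n t).1)
      (fun n => mul_le_mul_of_nonneg_left (hcb n t).2 (pow_nonneg hδ0 n))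
      ((summable_geometric_of_lt_one hδ0 hδ1).mul_right Rmax)
  -- evaluation of the value vector
  have hVeq : ∀ (δ : ℝ), 0 ≤ δ → δ < 1 → ∀ t,
      valueVec P R δ π t = ∑' n : ℕ, δ ^ n * c n t := by
    intro δ hδ0 hδ1 t
    have hsp : Summable (fun n : ℕ => δ ^ n • c n) := by
      rw [Pi.summable]
      intro t'
      simpa [smul_eq_mul] using hsum δ hδ0 hδ1 t'
    rw [valueVec, tsum_apply hsp]
    simp [smul_eq_mul]
  -- expansion of `(M^(k+1)).mulVec V_γ`
  have hsumShift : ∀ k : ℕ, ∀ t, Summable (fun j : ℕ => γ ^ j * c (k + 1 + j) t) := by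
    intro k t
    refine Summable.of_nonneg_of_le
      (fun j => mul_nonneg (pow_nonneg hγ0 j) (hcb _ t).1)
      (fun j => mul_le_mul_of_nonneg_left (hcb _ t).2 (pow_nonneg hγ0 j))
      ((summable_geometric_of_lt_one hγ0 hγ1).mul_right Rmax)
  have hMV : ∀ k : ℕ, ∀ t, (M ^ (k + 1)).mulVec (valueVec P R γ π) t
      = ∑' j : ℕ, γ ^ j * c (k + 1 + j) t := by
    intro k t
    have h1 : (M ^ (k + 1)).mulVec (valueVec P R γ π) t
        = ∑ t', ∑' j : ℕ, (M ^ (k + 1)) t t' * (γ ^ j * c j t') := by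
      rw [Matrix.mulVec, dotProduct]
      refine Finset.sum_congr rfl fun t' _ => ?_
      rw [hVeq γ hγ0 hγ1 t', tsum_mul_left]
    rw [h1, ← Summable.tsum_finsetSum (fun t' _ => ((hsum γ hγ0 hγ1 t').mul_left _))]
    refine tsum_congr fun j => ?_
    have h2 : ∑ t', (M ^ (k + 1)) t t' * (γ ^ j * c j t')
        = γ ^ j * ∑ t', (M ^ (k + 1)) t t' * c j t' := by
      rw [Finset.mul_sum]
      exact Finset.sum_congr rfl fun t' _ => by ring
    rw [h2]
    congr 1
    have h3 : (M ^ (k + 1)).mulVec (c j) t = c (k + 1 + j) t := by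
      show (M ^ (k + 1)).mulVec ((M ^ j).mulVec r) t = (M ^ (k + 1 + j)).mulVec r t
      rw [Matrix.mulVec_mulVec, ← pow_add]
    simpa [Matrix.mulVec, dotProduct] using h3
  -- abbreviate the state-evaluated sequence
  set cs : ℕ → ℝ := fun n => c n s with hcsdef
  -- the double series
  set F : ℕ × ℕ → ℝ := fun p => ((γ' - γ) * γ' ^ p.1) * (γ ^ p.2 * cs (p.1 + 1 + p.2)) with hFdef
  have hF0 : ∀ p, 0 ≤ F p := fun p =>
    mul_nonneg (mul_nonneg hγγ (pow_nonneg hγ'0 _))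
      (mul_nonneg (pow_nonneg hγ0 _) (hcb _ s).1)
  have hFs : Summable F := by
    refine Summable.of_nonneg_of_le hF0 (fun p => ?_)
      (Summable.mul_of_nonneg
        ((summable_geometric_of_lt_one hγ'0 hγ'1).mul_left (γ' - γ))
        ((summable_geometric_of_lt_one hγ0 hγ1).mul_right Rmax)
        (fun k => mul_nonneg hγγ (pow_nonneg hγ'0 k))
        (fun j => mul_nonneg (pow_nonneg hγ0 j) hRmax))
    exact mul_le_mul_of_nonneg_left
      (mul_le_mul_of_nonneg_left (hcb _ s).2 (pow_nonneg hγ0 _))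
      (mul_nonneg hγγ (pow_nonneg hγ'0 _))
  -- the series in the statement, rewritten
  have hterm : ∀ k : ℕ,
      (γ' - γ) * γ' ^ k * (M ^ (k + 1)).mulVec (valueVec P R γ π) s
        = ∑' j : ℕ, F (k, j) := by
    intro k
    rw [hMV k s, ← tsum_mul_left]
  -- summability of the series in the statement
  have hSummable : Summable (fun k : ℕ =>
      (γ' - γ) * γ' ^ k * (M ^ (k + 1)).mulVec (valueVec P R γ π) s) := by
    refine Summable.congr ?_ (fun k => (hterm k).symm)
    exact (hFs.hasSum.prod_fiberwise fun k => (hFs.prod_factor k).hasSum).summable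
  refine ⟨hSummable, ?_⟩
  -- rewrite both value vectors and the series
  rw [hVeq γ' hγ'0 hγ'1 s, hVeq γ hγ0 hγ1 s, tsum_congr hterm]
  -- collapse the double series
  rw [← Summable.tsum_prod' hFs hFs.prod_factor, tsum_prod_eq_tsum_antidiagonal hFs]
  -- evaluate the antidiagonal sums
  have hanti : ∀ n : ℕ, ∑ kl ∈ antidiagonal n, F kl
      = (γ' ^ (n + 1) - γ ^ (n + 1)) * cs (n + 1) := by
    intro n
    rw [Finset.Nat.sum_antidiagonal_eq_sum_range_succ (fun i j => F (i, j))]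
    have h4 : ∀ i ∈ Finset.range (n + 1),
        F (i, n - i) = γ' ^ i * γ ^ (n - i) * ((γ' - γ) * cs (n + 1)) := by
      intro i hi
      have hij : i + 1 + (n - i) = n + 1 := by
        have := Finset.mem_range.mp hi; omega
      simp only [hFdef, hij]
      ring
    rw [Finset.sum_congr rfl h4, ← Finset.sum_mul, ← mul_assoc]
    have hg := geom_sum₂_mul γ' γ (n + 1)
    simp only [Nat.add_sub_cancel] at hg
    rw [hg]
  rw [tsum_congr hanti]
  -- shift the index and split the difference
  have hg' : Summable (fun n : ℕ => γ' ^ n * cs n) := hsum γ' hγ'0 hγ'1 s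
  have hgg : Summable (fun n : ℕ => γ ^ n * cs n) := hsum γ hγ0 hγ1 s
  have hgsum : Summable (fun n : ℕ => (γ' ^ n - γ ^ n) * cs n) := by
    refine Summable.congr (hg'.sub hgg) (fun n => by ring)
  have hshift : ∑' n : ℕ, (γ' ^ (n + 1) - γ ^ (n + 1)) * cs (n + 1)
      = ∑' n : ℕ, (γ' ^ n - γ ^ n) * cs n := by
    rw [Summable.tsum_eq_zero_add hgsum]
    simp
  rw [hshift]
  have hsub : ∑' n : ℕ, (γ' ^ n - γ ^ n) * cs n
      = (∑' n : ℕ, γ' ^ n * cs n) - ∑' n : ℕ, γ ^ n * cs n := by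
    rw [← Summable.tsum_sub hg' hgg]
    exact tsum_congr fun n => by ring
  rw [hsub]
  ring
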